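/- Let F be a regular family of finite subsets of ℕ, ℓ ≥ 2, and T ∈ 𝒯^{M,(ℓ)}. Then: (1) T' = {t ∈ T : |t| ≤ ℓ−1} ∈ 𝒯^{M,(ℓ−1)}. (2) If n₁ is the root entry of T and n₁ < n₂ < ⋯ < n_k are chosen so that {(n₁, n_i) : i = 1, …, k} = {t ∈ T : |t| = 2}, then for each i = 1, …, k the tree T^{(i)} = {(n_i, s) : s ∈ {∅} ∪ [[ℕ]]^{<ω} with (n₁, n_i, s) ∈ T} belongs to ⋃_{j=1}^{ℓ−1} 𝒯^{M,(j)}, and T^{(i)} ∈ 𝒯^{M,(ℓ−1)} for at least one i. Moreover, if T ∈ 𝒯^{(ℓ)}, then T' ∈ 𝒯^{(ℓ−1)} and each T^{(i)} ∈ ⋃_{j=1}^{ℓ−1} 𝒯^{(j)}. -/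

import Mathlib

noncomputable section

open scoped Classical

/-- `A < B` for finite sets of naturals: every element of `A` is smaller than every
element of `B` (i.e. `max A < min B`, with the conventions `∅ < B` and `A < ∅`). -/
def finLT (A B : Finset ℕ) : Prop := ∀ a ∈ A, ∀ b ∈ B, a < b

/-- The minimum of a finite set of naturals (`0` if the set is empty; it is only ever
used for nonempty sets). -/
def sMin (A : Finset ℕ) : ℕ := sInf (A : Set ℕ)

/-- The composition `M[N]` of two families of finite subsets of `ℕ`:
all unions `F_1 ∪ ⋯ ∪ F_k` with `F_i ∈ N` nonempty, `F_1 < F_2 < ⋯ < F_k` and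
`{min F_i : i = 1, …, k} ∈ M`. -/
def famComp (M N : Set (Finset ℕ)) : Set (Finset ℕ) :=
  {A | ∃ (k : ℕ) (F : Fin k → Finset ℕ),
        (∀ i, F i ∈ N) ∧ (∀ i, (F i).Nonempty) ∧
        (∀ i j : Fin k, i < j → finLT (F i) (F j)) ∧
        (Finset.univ.image fun i => sMin (F i)) ∈ M ∧
        A = Finset.univ.biUnion F}

/-- `B` is a spread of `A`: there is an injection `f` of `A` onto `B` with `a ≤ f a`
for all `a ∈ A` (equivalently, writing `A = {a_1 < ⋯ < a_n}` and
`B = {b_1 < ⋯ < b_n}`, one has `a_i ≤ b_i` for all `i`). -/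
def IsSpread (A B : Finset ℕ) : Prop :=
  ∃ f : ℕ → ℕ, Set.InjOn f A ∧ (∀ a ∈ A, a ≤ f a) ∧ B = A.image f

/-- A family of finite subsets of `ℕ` is regular if it is hereditary, spreading, and
compact as a subset of `{0,1}^ℕ` (with the product of discrete topologies). -/
def IsRegularFam (F : Set (Finset ℕ)) : Prop :=
  (∀ A ∈ F, ∀ B ⊆ A, B ∈ F) ∧
  (∀ A ∈ F, ∀ B : Finset ℕ, IsSpread A B → B ∈ F) ∧
  IsCompact ((fun A : Finset ℕ => fun n : ℕ => decide (n ∈ A)) '' F : Set (ℕ → Bool))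

/-- `t` is a terminal node of the (finite) tree `T ⊆ [[ℕ]]^{<ω}`:
no proper extension of `t` lies in `T`. -/
def IsTerminal (T : Finset (List ℕ)) (t : List ℕ) : Prop :=
  t ∈ T ∧ ∀ u ∈ T, t <+: u → u = t

/-- The support of a node `s` in the tree `T`:
`supp(s) = {t(|t|) : t ⪰ s, t terminal in T}`. -/
def nodeSupp (T : Finset (List ℕ)) (s : List ℕ) : Set ℕ :=
  {m | ∃ t ∈ T, s <+: t ∧ IsTerminal T t ∧ t.getLast? = some m}

/-- `s ≺_lex t`: `s` and `t` are `⪯`-incomparable and `s` precedes `t`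
lexicographically. -/
def LexInc (s t : List ℕ) : Prop :=
  ¬ s <+: t ∧ ¬ t <+: s ∧ List.Lex (· < ·) s t

/-- `U < V` for sets of naturals. -/
def setLT (U V : Set ℕ) : Prop := ∀ a ∈ U, ∀ b ∈ V, a < b

/-- An `F`-allowable tree: a finite set of nonempty nondecreasing finite sequences of
naturals satisfying (T1)–(T4). -/
structure IsAllowTree (F : Set (Finset ℕ)) (T : Finset (List ℕ)) : Prop where
  /-- nodes are nonempty nondecreasing sequences -/
  nodes : ∀ t ∈ T, t ≠ [] ∧ t.Pairwise (· ≤ ·)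
  /-- (T1): closed under nonempty initial segments -/
  downward : ∀ t ∈ T, ∀ s : List ℕ, s ≠ [] → s <+: t → s ∈ T
  /-- (T2): there is a root of length 1 below every node -/
  exroot : ∃ n : ℕ, [n] ∈ T ∧ ∀ t ∈ T, [n] <+: t
  /-- (T3): a non-terminal node `t` has the successor `(t, t(|t|))`, and the set of its
  immediate-successor labels lies in `F` -/
  extend : ∀ t ∈ T, ¬ IsTerminal T t →
      (t ++ [t.getLast!]) ∈ T ∧ ∃ J : Finset ℕ, (∀ j : ℕ, j ∈ J ↔ t ++ [j] ∈ T) ∧ J ∈ F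
  /-- (T4): lexicographically comparable incomparable nodes have disjoint supports -/
  suppDisj : ∀ s ∈ T, ∀ t ∈ T, LexInc s t → Disjoint (nodeSupp T s) (nodeSupp T t)

/-- An `F`-admissible tree: an `F`-allowable tree satisfying in addition (T5). -/
def IsAdmTree (F : Set (Finset ℕ)) (T : Finset (List ℕ)) : Prop :=
  IsAllowTree F T ∧ ∀ s ∈ T, ∀ t ∈ T, LexInc s t → setLT (nodeSupp T s) (nodeSupp T t)

/-- The length `|T|` of a tree: the maximal length of its nodes. -/
def treeLen (T : Finset (List ℕ)) : ℕ := T.sup List.length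

/-- The subtree `T^{(m)} = {(m, s) : (n₁, m, s) ∈ T}` of `T` obtained by passing to the
second-level node `(n₁, m)` (where `n₁` is the root entry) and deleting the root. -/
def subTree (T : Finset (List ℕ)) (m : ℕ) : Finset (List ℕ) :=
  (T.filter fun t => 2 ≤ t.length ∧ t[1]? = some m).image List.tail


section TreeReductionHelpers

lemma head?_of_prefix' {u v : List ℕ} (h : u ≠ []) (hp : u <+: v) : v.head? = u.head? := by
  obtain ⟨r, rfl⟩ := hp
  cases u with
  | nil => simp at h
  | cons a l => simp

lemma getLast?_eq_getLast!' {l : List ℕ} (h : l ≠ []) : l.getLast? = some l.getLast! := by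
  cases hq : l.getLast? with
  | none => exact absurd (List.getLast?_eq_none_iff.mp hq) h
  | some a => rw [List.getLast!_of_getLast? hq]

lemma getLast?_cons_ne {a : ℕ} {r : List ℕ} (h : r ≠ []) :
    (a :: r).getLast? = r.getLast? := by
  cases r with
  | nil => simp at h
  | cons b l => exact List.getLast?_cons_cons

lemma lexInc_cons_iff {a : ℕ} {u v : List ℕ} : LexInc (a :: u) (a :: v) ↔ LexInc u v := by
  unfold LexInc
  rw [List.cons_prefix_cons, List.cons_prefix_cons]
  constructor
  · rintro ⟨h1, h2, h3⟩
    refine ⟨fun h => h1 ⟨rfl, h⟩, fun h => h2 ⟨rfl, h⟩, ?_⟩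
    cases h3 with
    | cons h => exact h
    | rel h => exact absurd h (lt_irrefl a)
  · rintro ⟨h1, h2, h3⟩
    exact ⟨fun h => h1 h.2, fun h => h2 h.2, List.Lex.cons h3⟩

lemma exists_terminal_ext {F : Set (Finset ℕ)} {T : Finset (List ℕ)}
    (hT : IsAllowTree F T) :
    ∀ t ∈ T, ∃ t' ∈ T, t <+: t' ∧ IsTerminal T t' ∧ t'.getLast? = t.getLast? := by
  have key : ∀ n : ℕ, ∀ t ∈ T, treeLen T - t.length = n →
      ∃ t' ∈ T, t <+: t' ∧ IsTerminal T t' ∧ t'.getLast? = t.getLast? := by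
    intro n
    induction n using Nat.strong_induction_on with
    | _ n ih =>
      intro t ht hn
      by_cases hterm : IsTerminal T t
      · exact ⟨t, ht, List.prefix_refl t, hterm, rfl⟩
      · obtain ⟨hu, -⟩ := hT.extend t ht hterm
        have hne : t ≠ [] := (hT.nodes t ht).1
        have hb : (t ++ [t.getLast!]).length ≤ treeLen T :=
          Finset.le_sup (f := List.length) hu
        simp only [List.length_append, List.length_cons, List.length_nil] at hb
        have hdec : treeLen T - (t ++ [t.getLast!]).length < n := by
          simp only [List.length_append, List.length_cons, List.length_nil]
          omega
        obtain ⟨t', ht', hp, hterm', hl⟩ := ih _ hdec _ hu rfl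
        refine ⟨t', ht', (t.prefix_append _).trans hp, hterm', ?_⟩
        rw [hl, List.getLast?_concat, getLast?_eq_getLast!' hne]
  intro t ht
  exact key _ t ht rfl

lemma supp_filter_subset {F : Set (Finset ℕ)} {T : Finset (List ℕ)}
    (hT : IsAllowTree F T) (k : ℕ) (s : List ℕ) :
    nodeSupp (T.filter fun t => t.length ≤ k) s ⊆ nodeSupp T s := by
  rintro m ⟨t, ht, hp, hterm, hl⟩
  have htT : t ∈ T := (Finset.mem_filter.mp ht).1
  obtain ⟨t', ht', hp', hterm', hl'⟩ := exists_terminal_ext hT t htT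
  exact ⟨t', ht', hp.trans hp', hterm', by rw [hl', hl]⟩

lemma mem_subTree_iff {T : Finset (List ℕ)} {n₁ : ℕ}
    (hroot : ∀ t ∈ T, [n₁] <+: t) (m : ℕ) (u : List ℕ) :
    u ∈ subTree T m ↔ (n₁ :: u) ∈ T ∧ u ≠ [] ∧ u.head? = some m := by
  constructor
  · intro hu
    obtain ⟨t, ht, rfl⟩ := Finset.mem_image.mp hu
    obtain ⟨htT, hlen2, hsec⟩ : t ∈ T ∧ 2 ≤ t.length ∧ t[1]? = some m := by
      have := Finset.mem_filter.mp ht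
      exact ⟨this.1, this.2.1, this.2.2⟩
    obtain ⟨r, rfl⟩ := hroot t htT
    simp only [List.singleton_append] at htT hlen2 hsec ⊢
    cases r with
    | nil => simp at hlen2
    | cons a l =>
      simp only [List.tail_cons]
      refine ⟨htT, by simp, ?_⟩
      simpa using hsec
  · rintro ⟨h1, h2, h3⟩
    refine Finset.mem_image.mpr ⟨n₁ :: u, Finset.mem_filter.mpr ⟨h1, ?_, ?_⟩, rfl⟩
    · cases u with
      | nil => simp at h2
      | cons a l => simp
    · cases u with
      | nil => simp at h2
      | cons a l => simpa using h3

lemma terminal_subTree {T : Finset (List ℕ)} {n₁ : ℕ}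
    (hroot : ∀ t ∈ T, [n₁] <+: t) {m : ℕ} {u : List ℕ} (hu : u ∈ subTree T m) :
    IsTerminal (subTree T m) u ↔ IsTerminal T (n₁ :: u) := by
  obtain ⟨h1, h2, h3⟩ := (mem_subTree_iff hroot m u).mp hu
  constructor
  · rintro ⟨-, hmax⟩
    refine ⟨h1, fun w hw hpw => ?_⟩
    obtain ⟨r, rfl⟩ := hroot w hw
    simp only [List.singleton_append] at hw hpw ⊢
    obtain ⟨-, hur⟩ := List.cons_prefix_cons.mp hpw
    have hrne : r ≠ [] := by
      rintro rfl
      exact h2 (List.prefix_nil.mp hur)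
    have hrsub : r ∈ subTree T m := (mem_subTree_iff hroot m r).mpr
      ⟨hw, hrne, by rw [head?_of_prefix' h2 hur, h3]⟩
    rw [hmax r hrsub hur]
  · rintro ⟨-, hmax⟩
    refine ⟨hu, fun w hw hpw => ?_⟩
    obtain ⟨hw1, hw2, hw3⟩ := (mem_subTree_iff hroot m w).mp hw
    have := hmax (n₁ :: w) hw1 (List.cons_prefix_cons.mpr ⟨rfl, hpw⟩)
    simpa using this

lemma supp_subTree {T : Finset (List ℕ)} {n₁ : ℕ}
    (hroot : ∀ t ∈ T, [n₁] <+: t) {m : ℕ} {u : List ℕ} (hu : u ∈ subTree T m) :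
    nodeSupp (subTree T m) u = nodeSupp T (n₁ :: u) := by
  obtain ⟨h1, h2, h3⟩ := (mem_subTree_iff hroot m u).mp hu
  ext k
  constructor
  · rintro ⟨v, hv, hpv, hterm, hl⟩
    obtain ⟨hv1, hv2, hv3⟩ := (mem_subTree_iff hroot m v).mp hv
    exact ⟨n₁ :: v, hv1, List.cons_prefix_cons.mpr ⟨rfl, hpv⟩,
      (terminal_subTree hroot hv).mp hterm, by rw [getLast?_cons_ne hv2, hl]⟩
  · rintro ⟨t, ht, hpt, hterm, hl⟩
    obtain ⟨r, rfl⟩ := hroot t ht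
    simp only [List.singleton_append] at ht hpt hterm hl
    obtain ⟨-, hur⟩ := List.cons_prefix_cons.mp hpt
    have hrne : r ≠ [] := by
      rintro rfl
      exact h2 (List.prefix_nil.mp hur)
    have hrsub : r ∈ subTree T m := (mem_subTree_iff hroot m r).mpr
      ⟨ht, hrne, by rw [head?_of_prefix' h2 hur, h3]⟩
    exact ⟨r, hrsub, hur, (terminal_subTree hroot hrsub).mpr hterm,
      by rw [← getLast?_cons_ne hrne, hl]⟩

lemma subTree_allow {F : Set (Finset ℕ)} {T : Finset (List ℕ)} {n₁ m : ℕ}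
    (hT : IsAllowTree F T) (hroot : ∀ t ∈ T, [n₁] <+: t) (hm : [n₁, m] ∈ T) :
    IsAllowTree F (subTree T m) := by
  constructor
  · intro u hu
    obtain ⟨h1, h2, h3⟩ := (mem_subTree_iff hroot m u).mp hu
    exact ⟨h2, ((hT.nodes _ h1).2).of_cons⟩
  · intro t ht s hs hps
    obtain ⟨h1, h2, h3⟩ := (mem_subTree_iff hroot m t).mp ht
    refine (mem_subTree_iff hroot m s).mpr
      ⟨hT.downward _ h1 _ (by simp) (List.cons_prefix_cons.mpr ⟨rfl, hps⟩), hs, ?_⟩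
    rw [← head?_of_prefix' hs hps, h3]
  · refine ⟨m, (mem_subTree_iff hroot m [m]).mpr ⟨hm, by simp, by simp⟩, ?_⟩
    intro u hu
    obtain ⟨-, h2, h3⟩ := (mem_subTree_iff hroot m u).mp hu
    cases u with
    | nil => simp at h2
    | cons a l =>
      simp only [List.head?_cons, Option.some.injEq] at h3
      subst h3
      exact ⟨l, rfl⟩
  · intro u hu hterm
    obtain ⟨h1, h2, h3⟩ := (mem_subTree_iff hroot m u).mp hu
    have hTterm : ¬ IsTerminal T (n₁ :: u) := fun h =>
      hterm ((terminal_subTree hroot hu).mpr h)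
    obtain ⟨hext, J, hJ, hJF⟩ := hT.extend (n₁ :: u) h1 hTterm
    have hlast : (n₁ :: u).getLast! = u.getLast! :=
      List.getLast!_of_getLast? ((getLast?_cons_ne h2).trans (getLast?_eq_getLast!' h2))
    rw [hlast] at hext
    constructor
    · refine (mem_subTree_iff hroot m _).mpr ⟨hext, by simp, ?_⟩
      rw [head?_of_prefix' h2 (u.prefix_append _), h3]
    · refine ⟨J, fun j => ?_, hJF⟩
      rw [hJ j]
      constructor
      · intro hj
        refine (mem_subTree_iff hroot m _).mpr ⟨hj, by simp, ?_⟩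
        rw [head?_of_prefix' h2 (u.prefix_append _), h3]
      · intro hj
        exact ((mem_subTree_iff hroot m _).mp hj).1
  · intro s hs t ht hst
    rw [supp_subTree hroot hs, supp_subTree hroot ht]
    exact hT.suppDisj _ ((mem_subTree_iff hroot m s).mp hs).1 _
      ((mem_subTree_iff hroot m t).mp ht).1 (lexInc_cons_iff.mpr hst)

end TreeReductionHelpers

/-- Let `F` be a regular family, `ℓ ≥ 2` and `T ∈ 𝒯^{M,(ℓ)}`.
Then (1) `T' = {t ∈ T : |t| ≤ ℓ-1} ∈ 𝒯^{M,(ℓ-1)}`; (2) each of the trees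
`T^{(i)}`, indexed by the second-level nodes `(n₁, n_i)` of `T`, belongs to
`⋃_{j=1}^{ℓ-1} 𝒯^{M,(j)}`, and at least one of them belongs to `𝒯^{M,(ℓ-1)}`.
Moreover, if `T ∈ 𝒯^{(ℓ)}`, then `T' ∈ 𝒯^{(ℓ-1)}` and each
`T^{(i)} ∈ ⋃_{j=1}^{ℓ-1} 𝒯^{(j)}`. -/
theorem tree_reduction (F : Set (Finset ℕ)) (hF : IsRegularFam F)
    (ℓ : ℕ) (hℓ : 2 ≤ ℓ) (T : Finset (List ℕ))
    (hT : IsAllowTree F T) (hlen : treeLen T = ℓ) :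
    (IsAllowTree F (T.filter fun t => t.length ≤ ℓ - 1) ∧
      treeLen (T.filter fun t => t.length ≤ ℓ - 1) = ℓ - 1) ∧
    (∀ n₁ : ℕ, [n₁] ∈ T → (∀ t ∈ T, [n₁] <+: t) →
      (∀ m : ℕ, [n₁, m] ∈ T →
        IsAllowTree F (subTree T m) ∧ 1 ≤ treeLen (subTree T m) ∧
          treeLen (subTree T m) ≤ ℓ - 1) ∧
      ∃ m : ℕ, [n₁, m] ∈ T ∧ treeLen (subTree T m) = ℓ - 1) ∧
    (IsAdmTree F T →
      IsAdmTree F (T.filter fun t => t.length ≤ ℓ - 1) ∧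
      ∀ n₁ : ℕ, [n₁] ∈ T → (∀ t ∈ T, [n₁] <+: t) →
        ∀ m : ℕ, [n₁, m] ∈ T →
          IsAdmTree F (subTree T m) ∧ 1 ≤ treeLen (subTree T m) ∧
            treeLen (subTree T m) ≤ ℓ - 1) := by
  -- basic consequences
  have hTne : T.Nonempty := by
    obtain ⟨n, hn, -⟩ := hT.exroot
    exact ⟨[n], hn⟩
  obtain ⟨tmax, htmaxT, htmaxlen⟩ := Finset.exists_mem_eq_sup T hTne List.length
  replace htmaxlen : tmax.length = ℓ := by rw [← hlen]; exact htmaxlen.symm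
  -- The filtered tree T'
  set T' := T.filter fun t => t.length ≤ ℓ - 1 with hT'def
  have hmemT' : ∀ t, t ∈ T' ↔ t ∈ T ∧ t.length ≤ ℓ - 1 := fun t => Finset.mem_filter
  -- T' is allowable
  have hT'allow : IsAllowTree F T' := by
    constructor
    · intro t ht
      exact hT.nodes t ((hmemT' t).mp ht).1
    · intro t ht s hs hps
      obtain ⟨ht1, ht2⟩ := (hmemT' t).mp ht
      exact (hmemT' s).mpr ⟨hT.downward t ht1 s hs hps, le_trans hps.length_le ht2⟩
    · obtain ⟨n, hn, hroot⟩ := hT.exroot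
      refine ⟨n, (hmemT' [n]).mpr ⟨hn, by simp; omega⟩, fun t ht => hroot t ((hmemT' t).mp ht).1⟩
    · intro t ht hterm
      obtain ⟨ht1, ht2⟩ := (hmemT' t).mp ht
      obtain ⟨u, hu, hpu, hune⟩ : ∃ u ∈ T', t <+: u ∧ u ≠ t := by
        by_contra hc
        push_neg at hc
        exact hterm ⟨ht, fun u hu hpu => hc u hu hpu⟩
      obtain ⟨hu1, hu2⟩ := (hmemT' u).mp hu
      have hlt : t.length < u.length := by
        have h1 := hpu.length_le
        have h2 : t.length ≠ u.length := fun h => hune (hpu.eq_of_length h).symm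
        omega
      have hTterm : ¬ IsTerminal T t := fun h => hune (h.2 u hu1 hpu)
      obtain ⟨hext, J, hJ, hJF⟩ := hT.extend t ht1 hTterm
      constructor
      · exact (hmemT' _).mpr ⟨hext, by simp; omega⟩
      · refine ⟨J, fun j => ?_, hJF⟩
        rw [hJ j]
        constructor
        · intro hj
          exact (hmemT' _).mpr ⟨hj, by simp; omega⟩
        · intro hj
          exact ((hmemT' _).mp hj).1
    · intro s hs t ht hst
      exact (hT.suppDisj s ((hmemT' s).mp hs).1 t ((hmemT' t).mp ht).1 hst).mono
        (supp_filter_subset hT _ s) (supp_filter_subset hT _ t)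
  -- T' has length ℓ - 1
  have hT'len : treeLen T' = ℓ - 1 := by
    apply le_antisymm
    · apply Finset.sup_le
      intro t ht
      exact ((hmemT' t).mp ht).2
    · have htake : tmax.take (ℓ - 1) ∈ T' := by
        refine (hmemT' _).mpr ⟨hT.downward tmax htmaxT _ ?_ (List.take_prefix _ _), by simp⟩
        have : (tmax.take (ℓ - 1)).length = ℓ - 1 := by simp; omega
        intro h
        rw [h] at this
        simp at this
        omega
      have := Finset.le_sup (f := List.length) htake
      have hlt : (tmax.take (ℓ - 1)).length = ℓ - 1 := by simp; omega
      rw [hlt] at this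
      exact this
  -- bounds for subtrees
  have hsubBound : ∀ n₁ : ℕ, (∀ t ∈ T, [n₁] <+: t) → ∀ m : ℕ, [n₁, m] ∈ T →
      1 ≤ treeLen (subTree T m) ∧ treeLen (subTree T m) ≤ ℓ - 1 := by
    intro n₁ hroot m hm
    constructor
    · have h1 : [m] ∈ subTree T m := (mem_subTree_iff hroot m [m]).mpr ⟨hm, by simp, by simp⟩
      exact Finset.le_sup (f := List.length) h1
    · apply Finset.sup_le
      intro u hu
      obtain ⟨h1, -, -⟩ := (mem_subTree_iff hroot m u).mp hu
      have h2 : (n₁ :: u).length ≤ treeLen T := Finset.le_sup (f := List.length) h1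
      rw [hlen] at h2
      simp only [List.length_cons] at h2
      omega
  refine ⟨⟨hT'allow, hT'len⟩, ?_, ?_⟩
  · intro n₁ hn₁ hroot
    refine ⟨fun m hm => ⟨subTree_allow hT hroot hm, hsubBound n₁ hroot m hm⟩, ?_⟩
    obtain ⟨r, hr⟩ := hroot tmax htmaxT
    cases r with
    | nil =>
      rw [← hr] at htmaxlen
      simp at htmaxlen
      omega
    | cons a r' =>
      have hmem2 : [n₁, a] ∈ T := by
        refine hT.downward tmax htmaxT _ (by simp) ?_
        rw [← hr]
        exact ⟨r', rfl⟩
      refine ⟨a, hmem2, le_antisymm (hsubBound n₁ hroot a hmem2).2 ?_⟩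
      have hsub : a :: r' ∈ subTree T a := by
        refine (mem_subTree_iff hroot a _).mpr ⟨?_, by simp, rfl⟩
        rw [← List.singleton_append, hr]
        exact htmaxT
      have h2 : (a :: r').length ≤ treeLen (subTree T a) := Finset.le_sup (f := List.length) hsub
      have h3 : tmax.length = ℓ := htmaxlen
      rw [← hr] at h3
      simp only [List.length_append, List.length_cons, List.length_nil, List.length_singleton] at h3
      simp only [List.length_cons] at h2
      omega
  · intro hadm
    constructor
    · refine ⟨hT'allow, fun s hs t ht hst => ?_⟩
      intro a ha b hb
      exact hadm.2 s ((hmemT' s).mp hs).1 t ((hmemT' t).mp ht).1 hst a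
        (supp_filter_subset hT _ s ha) b (supp_filter_subset hT _ t hb)
    · intro n₁ hn₁ hroot m hm
      refine ⟨⟨subTree_allow hT hroot hm, ?_⟩, hsubBound n₁ hroot m hm⟩
      intro s hs t ht hst
      rw [supp_subTree hroot hs, supp_subTree hroot ht]
      exact hadm.2 _ ((mem_subTree_iff hroot m s).mp hs).1 _
        ((mem_subTree_iff hroot m t).mp ht).1 (lexInc_cons_iff.mpr hst)
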